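/- Let $a$ be a positive integer and define $\zeta_a(s) = \prod_{\chi} L(\chi, s)$, the product over all Dirichlet characters $\chi$ modulo $a$ with complex values. For each prime $p \nmid a$, let $f(p)$ be the multiplicative order of $p$ in $(\mathbb{Z}/a\mathbb{Z})^{\times}$ and $g(p) = \phi(a)/f(p)$. Then for every complex $s$ with $\mathrm{Re}(s) > 1$, $\zeta_a(s) = \prod_{p \nmid a} \left(1 - p^{-f(p)s}\right)^{-g(p)}$, the product converging over all primes $p$ not dividing $a$. -/

import Mathlib

open Finset Complex

/-- Evaluation of Dirichlet characters at a fixed unit, as a monoid hom into `ℂˣ`. -/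
noncomputable def evalHom (a : ℕ) (u : (ZMod a)ˣ) : DirichletCharacter ℂ a →* ℂˣ where
  toFun χ := MulChar.equivToUnitHom χ u
  map_one' := by
    ext
    rw [MulChar.coe_equivToUnitHom]
    exact MulChar.one_apply_coe u
  map_mul' χ ψ := MulChar.equivToUnitHom_mul_apply χ ψ u

lemma prod_char_eq (a : ℕ) [NeZero a] (u : (ZMod a)ˣ) (x : ℂ) :
    ∏ χ : DirichletCharacter ℂ a, (1 - χ ↑u * x)
      = (1 - x ^ orderOf u) ^ (a.totient / orderOf u) := by
  classical
  set f := orderOf u with hf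
  have hfpos : 0 < f := orderOf_pos u
  have : NeZero f := ⟨hfpos.ne'⟩
  set E := evalHom a u with hE
  have hEval : ∀ χ : DirichletCharacter ℂ a, ((E χ : ℂˣ) : ℂ) = χ ↑u :=
    fun χ => MulChar.coe_equivToUnitHom χ u
  have hfin : Finite E.range := Set.Finite.to_subtype (Set.finite_range E)
  have hEf : ∀ χ : DirichletCharacter ℂ a, (E χ) ^ f = 1 := by
    intro χ
    show (MulChar.equivToUnitHom χ) u ^ f = 1
    rw [← map_pow, pow_orderOf_eq_one, map_one]
  -- the range of `E` has cardinality `f`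
  have hcard : Nat.card E.range = f := by
    refine Nat.dvd_antisymm ?_ ?_
    · have hle : E.range ≤ rootsOfUnity f ℂ := by
        rintro z ⟨χ, rfl⟩
        rw [_root_.mem_rootsOfUnity]
        exact hEf χ
      have := Subgroup.card_dvd_of_le hle
      rwa [Complex.card_rootsOfUnity] at this
    · -- `u ^ m = 1` where `m = Nat.card E.range`
      have hum : u ^ (Nat.card E.range) = 1 := by
        by_contra h
        have h1 : ((u ^ Nat.card E.range : (ZMod a)ˣ) : ZMod a) ≠ 1 := by
          intro hh
          exact h (Units.ext hh)
        obtain ⟨χ, hχ⟩ := DirichletCharacter.exists_apply_ne_one_of_hasEnoughRootsOfUnity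
          (R := ℂ) h1
        apply hχ
        have hmem : (⟨E χ, ⟨χ, rfl⟩⟩ : E.range) ^ Nat.card E.range = 1 := pow_card_eq_one'
        have h2 : (E χ) ^ Nat.card E.range = 1 := by
          have := congrArg (Subtype.val) hmem
          simpa using this
        calc χ ↑(u ^ Nat.card E.range) = χ ↑u ^ Nat.card E.range := by
              rw [Units.val_pow_eq_pow_val, map_pow]
          _ = ((E χ ^ Nat.card E.range : ℂˣ) : ℂ) := by rw [Units.val_pow_eq_pow_val, hEval]
          _ = 1 := by rw [h2, Units.val_one]
      exact orderOf_dvd_of_pow_eq_one hum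
  set V : Finset ℂ := univ.image (fun χ : DirichletCharacter ℂ a => χ ↑u) with hV
  have hVcard : V.card = f := by
    have h1 : V = (univ.image E).image (fun z : ℂˣ => (z : ℂ)) := by
      ext z
      simp only [hV, mem_image, mem_univ, true_and]
      constructor
      · rintro ⟨χ, rfl⟩; exact ⟨E χ, ⟨χ, by simp⟩, hEval χ⟩
      · rintro ⟨w, ⟨χ, -, rfl⟩, rfl⟩; exact ⟨χ, (hEval χ).symm⟩
    rw [h1, Finset.card_image_of_injective _ (fun _ _ => Units.ext)]
    have h2 : ((univ.image E : Finset ℂˣ) : Set ℂˣ) = Set.range E := by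
      ext z; simp
    have h3 : Nat.card E.range = (univ.image E).card := by
      rw [← Set.ncard_coe_finset, h2, ← Nat.card_coe_set_eq]
      exact Nat.card_congr (Equiv.setCongr E.coe_range)
    rw [← h3, hcard]
  -- V is the set of f-th roots of unity
  have hVroots : V = Polynomial.nthRootsFinset f (1 : ℂ) := by
    refine Finset.eq_of_subset_of_card_le ?_ ?_
    · intro z hz
      rw [hV, mem_image] at hz
      obtain ⟨χ, -, rfl⟩ := hz
      rw [Polynomial.mem_nthRootsFinset hfpos (1 : ℂ)]
      calc χ ↑u ^ f = ((E χ ^ f : ℂˣ) : ℂ) := by rw [Units.val_pow_eq_pow_val, hEval]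
        _ = 1 := by rw [hEf, Units.val_one]
    · rw [hVcard, (Complex.isPrimitiveRoot_exp f hfpos.ne').card_nthRootsFinset]
  -- all fibers have the same cardinality
  set c := (univ.filter fun χ : DirichletCharacter ℂ a => χ ↑u = 1).card with hc
  have hconst : ∀ z ∈ V, (univ.filter fun χ : DirichletCharacter ℂ a => χ ↑u = z).card = c := by
    intro z hz
    rw [hV, mem_image] at hz
    obtain ⟨χz, -, hχz⟩ := hz
    have hzne : z ≠ 0 := by
      rw [← hχz, ← hEval]; exact Units.ne_zero _
    refine Finset.card_bij' (fun χ _ => χz⁻¹ * χ) (fun ψ _ => χz * ψ) ?_ ?_ ?_ ?_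
    · intro χ hχ
      rw [mem_filter] at hχ ⊢
      refine ⟨mem_univ _, ?_⟩
      rw [MulChar.coeToFun_mul, Pi.mul_apply, MulChar.inv_apply_eq_inv', hχz, hχ.2,
        inv_mul_cancel₀ hzne]
    · intro ψ hψ
      rw [mem_filter] at hψ ⊢
      refine ⟨mem_univ _, ?_⟩
      rw [MulChar.coeToFun_mul, Pi.mul_apply, hχz, hψ.2, mul_one]
    · intro χ _; show χz * (χz⁻¹ * χ) = χ; rw [← mul_assoc, mul_inv_cancel, one_mul]
    · intro ψ _; show χz⁻¹ * (χz * ψ) = ψ; rw [← mul_assoc, inv_mul_cancel, one_mul]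
  have htot : Fintype.card (DirichletCharacter ℂ a) = a.totient := by
    rw [← Nat.card_eq_fintype_card]
    exact DirichletCharacter.card_eq_totient_of_hasEnoughRootsOfUnity ℂ a
  have hsum : f * c = a.totient := by
    have := Finset.card_eq_sum_card_fiberwise
      (f := fun χ : DirichletCharacter ℂ a => χ ↑u) (s := univ) (t := V)
      (fun χ _ => mem_image_of_mem _ (mem_univ χ))
    rw [Finset.card_univ, htot] at this
    rw [this, Finset.sum_congr rfl hconst, Finset.sum_const, hVcard, smul_eq_mul]
  have hcval : c = a.totient / f := by
    rw [← hsum, Nat.mul_div_cancel_left _ hfpos]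
  calc ∏ χ : DirichletCharacter ℂ a, (1 - χ ↑u * x)
      = ∏ z ∈ V, ∏ χ ∈ univ.filter (fun χ : DirichletCharacter ℂ a => χ ↑u = z),
          (1 - χ ↑u * x) :=
        (Finset.prod_fiberwise_of_maps_to (fun χ _ => mem_image_of_mem _ (mem_univ χ)) _).symm
    _ = ∏ z ∈ V, (1 - z * x) ^ (a.totient / f) := by
        refine Finset.prod_congr rfl fun z hz => ?_
        rw [← hconst z hz, ← hcval] at *
        rw [← Finset.prod_const]
        refine Finset.prod_congr rfl fun χ hχ => ?_
        rw [(Finset.mem_filter.mp hχ).2]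
    _ = (∏ z ∈ V, (1 - z * x)) ^ (a.totient / f) := Finset.prod_pow _ _ _
    _ = (1 - x ^ f) ^ (a.totient / f) := by
        rw [hVroots]
        congr 1
        have := (Complex.isPrimitiveRoot_exp f hfpos.ne').pow_sub_pow_eq_prod_sub_mul
          (x := (1 : ℂ)) (y := x) hfpos
        rw [one_pow] at this
        rw [← this]



/-- Product expansion of `ζ_a(s) = ∏_χ L(χ, s)`: for `Re s > 1`,
`ζ_a(s) = ∏_{p ∤ a} (1 - p^{-f(p) s})^{-g(p)}`, where `f(p)` is the multiplicative order
of `p` modulo `a` and `g(p) = φ(a)/f(p)`, the product converging over primes `p ∤ a`. -/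
theorem stmt7 (a : ℕ) (ha : 0 < a) (s : ℂ) (hs : 1 < s.re) :
    HasProd
      (fun p : {p : Nat.Primes // ¬ (p : ℕ) ∣ a} =>
        ((1 - ((p.1 : ℕ) : ℂ) ^ (-(orderOf (((p.1 : ℕ) : ℕ) : ZMod a) : ℂ) * s)) ^
            (Nat.totient a / orderOf (((p.1 : ℕ) : ℕ) : ZMod a)))⁻¹)
      (∏ χ : DirichletCharacter ℂ a, LSeries (fun n => χ ((n : ℕ) : ZMod a)) s) := by
  have hNZ : NeZero a := ⟨ha.ne'⟩
  set F : Nat.Primes → ℂ := fun p =>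
    ((1 - ((p : ℕ) : ℂ) ^ (-(orderOf (((p : ℕ) : ℕ) : ZMod a) : ℂ) * s)) ^
        (Nat.totient a / orderOf (((p : ℕ) : ℕ) : ZMod a)))⁻¹ with hF
  have hFone : ∀ p : Nat.Primes, (p : ℕ) ∣ a → F p = 1 := by
    intro p hpa
    have hnu : ¬ IsUnit ((((p : ℕ) : ℕ)) : ZMod a) := by
      rw [ZMod.isUnit_prime_iff_not_dvd p.2]
      exact not_not.mpr hpa
    have h0 : orderOf ((((p : ℕ) : ℕ)) : ZMod a) = 0 := by
      rw [orderOf_eq_zero_iff]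
      exact fun hfin => hnu hfin.isUnit
    rw [hF]
    simp only [h0, Nat.cast_zero, neg_zero, zero_mul, cpow_zero, sub_self, Nat.div_zero,
      pow_zero, inv_one]
  have hkey : ∀ p : Nat.Primes,
      ∏ χ : DirichletCharacter ℂ a, (1 - χ ((p : ℕ) : ZMod a) * ((p : ℕ) : ℂ) ^ (-s))⁻¹
        = F p := by
    intro p
    rw [Finset.prod_inv_distrib]
    by_cases hpa : (p : ℕ) ∣ a
    · rw [hFone p hpa]
      have hnu : ¬ IsUnit ((((p : ℕ) : ℕ)) : ZMod a) := by
        rw [ZMod.isUnit_prime_iff_not_dvd p.2]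
        exact not_not.mpr hpa
      rw [Finset.prod_eq_one fun χ _ => by rw [MulChar.map_nonunit χ hnu, zero_mul, sub_zero],
        inv_one]
    · have hu := (ZMod.isUnit_prime_iff_not_dvd p.2).mpr hpa
      have hspec : ((hu.unit : (ZMod a)ˣ) : ZMod a) = ((p : ℕ) : ZMod a) := hu.unit_spec
      have horder : orderOf hu.unit = orderOf ((((p : ℕ) : ℕ)) : ZMod a) := by
        rw [← orderOf_units, hspec]
      have hprod := prod_char_eq a hu.unit (((p : ℕ) : ℂ) ^ (-s))
      rw [hspec, horder] at hprod
      rw [hprod, hF]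
      congr 2
      rw [← Complex.cpow_nat_mul]
      congr 1
      ring_nf
  have hP : HasProd F (∏ χ : DirichletCharacter ℂ a, LSeries (fun n => χ ((n : ℕ) : ZMod a)) s) := by
    have h1 := hasProd_prod (s := Finset.univ)
      (f := fun (χ : DirichletCharacter ℂ a) (p : Nat.Primes) =>
        (1 - χ ((p : ℕ) : ZMod a) * ((p : ℕ) : ℂ) ^ (-s))⁻¹)
      (a := fun χ : DirichletCharacter ℂ a => LSeries (fun n => χ ((n : ℕ) : ZMod a)) s)
      (fun χ _ => DirichletCharacter.LSeries_eulerProduct_hasProd χ hs)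
    have h2 : (fun p : Nat.Primes =>
        ∏ χ : DirichletCharacter ℂ a, (1 - χ ((p : ℕ) : ZMod a) * ((p : ℕ) : ℂ) ^ (-s))⁻¹) = F :=
      funext hkey
    exact h2 ▸ h1
  have hsupp : Function.mulSupport F ⊆ {p : Nat.Primes | ¬ (p : ℕ) ∣ a} := by
    intro p hp
    exact fun hpa => hp (hFone p hpa)
  exact (hasProd_subtype_iff_of_mulSupport_subset hsupp).mpr hP
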